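/- Let 0 < p ≤ 1, let n ≥ 1, and let X_1, …, X_n be independent geometric random variables with parameter p. Set X = Σ_{i=1}^n X_i and μ = n/p. Then for every real δ > 1/p − 1, P[X > μ + δn] ≤ exp(−p²δn/6). -/

import Mathlib

open MeasureTheory ProbabilityTheory
open scoped ENNReal

lemma aux_log_bound (v : ℝ) (h0 : 0 ≤ v) (h1 : v < 1) :
    v + v ^ 2 / 3 ≤ -Real.log (1 - v) := by
  have hw0 : (0:ℝ) < 1 - v := by linarith
  set c : ℝ := (1 - v) ^ ((1:ℝ)/3) with hc
  have hc0 : 0 < c := Real.rpow_pos_of_pos hw0 _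
  have hc3 : c ^ (3:ℕ) = 1 - v := by
    rw [hc, ← Real.rpow_natCast ((1 - v) ^ ((1:ℝ)/3)) 3, ← Real.rpow_mul hw0.le]
    norm_num
  have hcle : c ≤ 1 := by nlinarith [sq_nonneg c, sq_nonneg (c - 1), sq_nonneg (c + 1)]
  have hlog : Real.log (1 - v) = 3 * Real.log c := by
    rw [← hc3, Real.log_pow]; push_cast; ring
  have hlc : Real.log c ≤ c - 1 := Real.log_le_sub_one_of_pos hc0
  have hv : v = 1 - c ^ 3 := by linarith [hc3]
  have key : v + v ^ 2 / 3 ≤ 3 * (1 - c) := by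
    rw [hv]
    nlinarith [sq_nonneg (1 - c), sq_nonneg c, mul_nonneg (mul_nonneg hc0.le hc0.le) hc0.le,
      mul_nonneg (sq_nonneg (1 - c)) hc0.le, mul_nonneg (mul_nonneg (sq_nonneg (1 - c)) hc0.le) hc0.le,
      mul_nonneg (mul_nonneg (sq_nonneg (1 - c)) (sq_nonneg c)) hc0.le]
  rw [hlog]
  linarith

set_option maxHeartbeats 1000000 in
/-- For `n ≥ 1` independent geometric random variables with parameter
`0 < p ≤ 1`, with sum `X` and mean `μ = n/p`, for every `δ > 1/p - 1` one has
`P[X > μ + δn] ≤ exp(-p²δn/6)`. -/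
theorem stmt_1 {Ω : Type} [MeasurableSpace Ω] (μ : Measure Ω) [IsProbabilityMeasure μ]
    (p : ℝ) (hp0 : 0 < p) (hp1 : p ≤ 1) (n : ℕ) (hn : 1 ≤ n)
    (X : Fin n → Ω → ℕ) (hmeas : ∀ i, Measurable (X i))
    (hindep : iIndepFun X μ)
    (hgeom : ∀ i, ∀ k : ℕ, 1 ≤ k →
      μ {ω | X i ω = k} = ENNReal.ofReal ((1 - p) ^ (k - 1) * p))
    (δ : ℝ) (hδ : 1 / p - 1 < δ) :
    μ {ω | (n : ℝ) / p + δ * n < ∑ i, (X i ω : ℝ)} ≤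
      ENNReal.ofReal (Real.exp (-(p ^ 2 * δ * n) / 6)) := by
  rcases eq_or_lt_of_le hp1 with hp | hp
  · -- p = 1 : each Xᵢ = 1 a.s., the event is null
    subst hp
    have hδ0 : 0 < δ := by simpa using hδ
    have hone : ∀ i, μ {ω | X i ω = 1} = 1 := by
      intro i
      rw [hgeom i 1 le_rfl]
      norm_num
    have hcompl : μ (⋃ i, {ω | X i ω = 1}ᶜ) = 0 := by
      refine measure_iUnion_null fun i => ?_
      have hms : MeasurableSet {ω | X i ω = 1} := hmeas i (measurableSet_singleton 1)
      rw [measure_compl hms (measure_ne_top μ _), hone i, measure_univ]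
      simp
    refine le_trans (le_trans (measure_mono ?_) hcompl.le) zero_le
    intro ω hω
    simp only [Set.mem_setOf_eq] at hω
    simp only [Set.mem_iUnion, Set.mem_compl_iff, Set.mem_setOf_eq]
    by_contra hcon
    push_neg at hcon
    have hsum : ∑ i, (X i ω : ℝ) = n := by
      rw [Finset.sum_congr rfl fun i _ => by rw [hcon i]]
      simp
    rw [hsum] at hω
    have hn0 : (0:ℝ) < n := by exact_mod_cast hn
    nlinarith
  · -- p < 1
    set q : ℝ := 1 - p with hq
    have hq0 : 0 < q := by simp [hq]; linarith
    have hq1 : q < 1 := by simp [hq]; linarith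
    set x : ℝ := p * δ with hxdef
    have hxq : q < x := by
      have h := mul_lt_mul_of_pos_left hδ hp0
      have : p * (1/p - 1) = 1 - p := by field_simp
      rw [this] at h
      simpa [hq, hxdef] using h
    have hx0 : 0 < x := hq0.trans hxq
    have hqx0 : 0 < q + x := by linarith
    have h1x : 0 < 1 + x := by linarith
    set E : ℝ := (q + x) / (q * (1 + x)) with hEdef
    have hE0 : 0 < E := div_pos hqx0 (by positivity)
    have hE1 : 1 ≤ E := by
      rw [hEdef, le_div_iff₀ (by positivity)]
      nlinarith
    set t : ℝ := Real.log E with htdef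
    have ht0 : 0 ≤ t := Real.log_nonneg hE1
    have hexpt : Real.exp t = E := Real.exp_log hE0
    have hqE : q * E = (q + x) / (1 + x) := by
      rw [hEdef]; field_simp
    have hqE1 : q * E < 1 := by
      rw [hqE, div_lt_one h1x]; linarith
    have hqE0 : 0 ≤ q * E := by positivity
    set M : ℝ := (q + x) / q with hMdef
    have hM0 : 0 < M := div_pos hqx0 hq0
    have hME : M = E * (1 + x) := by
      rw [hMdef, hEdef]; field_simp
    -- zero mass at 0
    have hzero : ∀ i, μ {ω | X i ω = 0} = 0 := by
      intro i
      have hdis : Pairwise (Function.onFun Disjoint fun k : ℕ => X i ⁻¹' {k}) := by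
        intro k l hkl
        exact Set.disjoint_left.mpr fun ω h1 h2 => hkl (by
          simp only [Set.mem_preimage, Set.mem_singleton_iff] at h1 h2; omega)
      have hmk : ∀ k : ℕ, MeasurableSet (X i ⁻¹' {k}) :=
        fun k => hmeas i (measurableSet_singleton k)
      have huniv : ∑' k : ℕ, μ (X i ⁻¹' {k}) = 1 := by
        rw [← measure_iUnion hdis hmk]
        have : ⋃ k : ℕ, X i ⁻¹' {k} = Set.univ := by
          ext ω; simp
        rw [this, measure_univ]
      have hpre : ∀ k : ℕ, μ (X i ⁻¹' {k}) = μ {ω | X i ω = k} := fun k => rfl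
      have htail : ∑' j : ℕ, μ (X i ⁻¹' {(j + 1 : ℕ)}) = 1 := by
        have hsummable : Summable (fun j : ℕ => q ^ j * p) :=
          (summable_geometric_of_lt_one hq0.le hq1).mul_right p
        calc ∑' j : ℕ, μ (X i ⁻¹' {(j + 1 : ℕ)})
            = ∑' j : ℕ, ENNReal.ofReal (q ^ j * p) := by
              refine tsum_congr fun j => ?_
              rw [hpre, hgeom i (j + 1) (by omega)]
              simp [hq]
          _ = ENNReal.ofReal (∑' j : ℕ, q ^ j * p) :=
              (ENNReal.ofReal_tsum_of_nonneg (fun j => by positivity) hsummable).symm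
          _ = 1 := by
              rw [tsum_mul_right, tsum_geometric_of_lt_one hq0.le hq1]
              have : (1 - q)⁻¹ * p = 1 := by
                rw [hq, sub_sub_cancel]; exact inv_mul_cancel₀ hp0.ne'
              rw [this, ENNReal.ofReal_one]
      rw [tsum_eq_zero_add' ENNReal.summable] at huniv
      rw [htail] at huniv
      rw [← hpre 0]
      have hle : μ (X i ⁻¹' {(0:ℕ)}) ≠ ⊤ := measure_ne_top μ _
      have := ENNReal.eq_sub_of_add_eq' ENNReal.one_ne_top huniv
      simpa using this
    -- lintegral computation
    have hlint : ∀ i, ∫⁻ ω, ENNReal.ofReal (Real.exp (t * (X i ω : ℝ))) ∂μ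
        = ENNReal.ofReal M := by
      intro i
      have hfm : Measurable (fun k : ℕ => ENNReal.ofReal (Real.exp (t * (k : ℝ)))) :=
        measurable_from_top
      have h1 : ∫⁻ ω, ENNReal.ofReal (Real.exp (t * (X i ω : ℝ))) ∂μ
          = ∑' k : ℕ, ENNReal.ofReal (Real.exp (t * (k : ℝ))) * μ {ω | X i ω = k} := by
        rw [← lintegral_map hfm (hmeas i), lintegral_countable']
        refine tsum_congr fun k => ?_
        rw [Measure.map_apply (hmeas i) (measurableSet_singleton k)]
        rfl
      rw [h1, tsum_eq_zero_add' ENNReal.summable]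
      rw [hzero i, mul_zero, zero_add]
      have hterm : ∀ j : ℕ, ENNReal.ofReal (Real.exp (t * ((j + 1 : ℕ) : ℝ))) *
          μ {ω | X i ω = j + 1} = ENNReal.ofReal (p * E * (q * E) ^ j) := by
        intro j
        rw [hgeom i (j + 1) (by omega)]
        rw [← ENNReal.ofReal_mul (Real.exp_pos _).le]
        congr 1
        have hexp : Real.exp (t * ((j + 1 : ℕ) : ℝ)) = E ^ (j + 1) := by
          rw [mul_comm, Real.exp_nat_mul, hexpt]
        rw [hexp]
        have : (j + 1 - 1 : ℕ) = j := by omega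
        rw [this]
        simp only [hq]
        rw [mul_pow, pow_succ]
        ring
      rw [tsum_congr hterm]
      have hsummable : Summable (fun j : ℕ => p * E * (q * E) ^ j) :=
        (summable_geometric_of_lt_one hqE0 hqE1).mul_left (p * E)
      rw [← ENNReal.ofReal_tsum_of_nonneg (fun j => by positivity) hsummable]
      congr 1
      have h1qE : (1 - q * E) = p / (1 + x) := by
        rw [hqE]; rw [hq]; field_simp; ring
      rw [tsum_mul_left, tsum_geometric_of_lt_one hqE0 hqE1, h1qE, hMdef, hEdef]
      rw [inv_div]
      field_simp
    -- real-valued versions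
    have hYm : ∀ i : Fin n, Measurable (fun ω => (X i ω : ℝ)) :=
      fun i => measurable_from_top.comp (hmeas i)
    have hint : ∀ i : Fin n, Integrable (fun ω => Real.exp (t * (X i ω : ℝ))) μ := by
      intro i
      refine ⟨(((hYm i).const_mul t).exp).aestronglyMeasurable, ?_⟩
      rw [hasFiniteIntegral_iff_ofReal (ae_of_all _ fun ω => (Real.exp_pos _).le), hlint i]
      exact ENNReal.ofReal_lt_top
    have hmgf : ∀ i : Fin n, mgf (fun ω => (X i ω : ℝ)) μ t = M := by
      intro i
      rw [mgf, integral_eq_lintegral_of_nonneg_ae (ae_of_all _ fun ω => (Real.exp_pos _).le)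
        (((hYm i).const_mul t).exp).aestronglyMeasurable, hlint i,
        ENNReal.toReal_ofReal hM0.le]
    have hYindep : iIndepFun (fun i : Fin n => fun ω => (X i ω : ℝ)) μ :=
      hindep.comp (fun _ => (Nat.cast : ℕ → ℝ)) (fun _ => measurable_from_top)
    have hsum_int : Integrable
        (fun ω => Real.exp (t * (∑ i : Fin n, fun ω' => (X i ω' : ℝ)) ω)) μ :=
      hYindep.integrable_exp_mul_sum (fun i => hYm i) (fun i _ => hint i)
    set ε : ℝ := (n : ℝ) / p + δ * n with hεdef
    have hch := measure_ge_le_exp_mul_mgf (μ := μ) (X := ∑ i : Fin n, fun ω => (X i ω : ℝ))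
      ε ht0 hsum_int
    have hmgfs : mgf (∑ i : Fin n, fun ω => (X i ω : ℝ)) μ t = M ^ n := by
      rw [hYindep.mgf_sum (fun i => hYm i) Finset.univ]
      simp [hmgf]
    rw [hmgfs] at hch
    -- the analytic inequality
    have hkey : Real.exp (-t * ε) * M ^ n ≤ Real.exp (-(p ^ 2 * δ * n) / 6) := by
      have hunit : Real.exp (-t * (1/p + δ)) * M ≤ Real.exp (-(p ^ 2 * δ) / 6) := by
        have hMexp : M = Real.exp (Real.log (1 + x) + t) := by
          rw [Real.exp_add, Real.exp_log h1x, hexpt, hME]; ring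
        rw [hMexp, ← Real.exp_add]
        rw [Real.exp_le_exp]
        -- need: -t*(1/p+δ) + (log(1+x) + t) ≤ -(p^2*δ)/6
        set v : ℝ := p * x / (q + x) with hvdef
        have hv0 : 0 ≤ v := by positivity
        have hv1 : v < 1 := by
          rw [hvdef, div_lt_one hqx0]
          nlinarith
        have h1v : 1 - v = 1 / E := by
          rw [hvdef, hEdef]
          field_simp
          rw [hq]; ring
        have htv : t = -Real.log (1 - v) := by
          rw [h1v, one_div, Real.log_inv, htdef, neg_neg]
        have hvt : v + v ^ 2 / 3 ≤ t := by
          rw [htv]; exact aux_log_bound v hv0 hv1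
        have hlog1x : Real.log (1 + x) ≤ x := by
          have := Real.log_le_sub_one_of_pos h1x; linarith
        have hvval : (v + v ^ 2 / 3) * ((q + x) / p) = x + p * x ^ 2 / (3 * (q + x)) := by
          rw [hvdef]; field_simp
        have hkey1 : x + p * x ^ 2 / (3 * (q + x)) ≤ t * ((q + x) / p) := by
          rw [← hvval]
          exact mul_le_mul_of_nonneg_right hvt (by positivity)
        have hkey2 : p * x / 6 ≤ p * x ^ 2 / (3 * (q + x)) := by
          rw [div_le_div_iff₀ (by norm_num) (by positivity)]
          nlinarith [mul_lt_mul_of_pos_left hxq (mul_pos hp0 hx0)]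
        have hcoef : 1/p + δ - 1 = (q + x) / p := by
          rw [hq, hxdef]; field_simp; ring
        have hpx : p ^ 2 * δ = p * x := by rw [hxdef]; ring
        have : Real.log (1 + x) + p * x / 6 ≤ t * ((q + x) / p) := by linarith
        rw [← hcoef] at this
        rw [hpx]
        nlinarith [this]
      have hε : ε = (1/p + δ) * n := by rw [hεdef]; ring
      have h1 : Real.exp (-t * ε) = Real.exp (-t * (1/p + δ)) ^ n := by
        rw [← Real.exp_nat_mul, hε]; ring_nf
      have h2 : Real.exp (-(p ^ 2 * δ * n) / 6) = Real.exp (-(p ^ 2 * δ) / 6) ^ n := by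
        rw [← Real.exp_nat_mul]; ring_nf
      rw [h1, h2, ← mul_pow]
      exact pow_le_pow_left₀ (by positivity) hunit n
    -- assemble
    calc μ {ω | (n : ℝ) / p + δ * n < ∑ i, (X i ω : ℝ)}
        ≤ μ {ω | ε ≤ (∑ i : Fin n, fun ω' => (X i ω' : ℝ)) ω} := by
          refine measure_mono fun ω hω => ?_
          simp only [Set.mem_setOf_eq, Finset.sum_apply] at hω ⊢
          exact le_of_lt hω
      _ = ENNReal.ofReal ((μ {ω | ε ≤ (∑ i : Fin n, fun ω' => (X i ω' : ℝ)) ω}).toReal) :=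
          (ENNReal.ofReal_toReal (measure_ne_top μ _)).symm
      _ ≤ ENNReal.ofReal (Real.exp (-t * ε) * M ^ n) := ENNReal.ofReal_le_ofReal hch
      _ ≤ ENNReal.ofReal (Real.exp (-(p ^ 2 * δ * n) / 6)) := ENNReal.ofReal_le_ofReal hkey
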